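/- arXiv:2204.11912 — 2 statements merged into one kernel-verified Lean document; each statement's English description precedes it below -/
import Mathlib

section
/- Let Ω ⊂ ℝ^d be an open set, ρ ∈ L¹(Ω) with 0 ≤ ρ ≤ 1 a.e., and T : Ω → Ω a Borel map with Jacobian DT(x) positive definite a.e. such that ρ(x)/|det DT(x)| ≤ 1 a.e. (i.e. the pushforward density of ρ under T is at most 1). For t ∈ [0,1] set T_t(x) = (1-t)x + t·T(x). Then the pushforward density ρ_t of ρ under T_t satisfies ρ_t ≤ 1 a.e.; the key pointwise inequality is 1/|det((1-t)I + t·DT(x))| ≤ (1-t) + t/|det DT(x)| for a.e. x. -/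
open MeasureTheory

section Aux
open Matrix

lemma key_det {d : ℕ} {A : Matrix (Fin d) (Fin d) ℝ} (hA : A.PosDef) {t : ℝ}
    (ht0 : 0 ≤ t) (ht1 : t ≤ 1) :
    0 < ((1 - t) • (1 : Matrix (Fin d) (Fin d) ℝ) + t • A).det ∧
      1 / ((1 - t) • (1 : Matrix (Fin d) (Fin d) ℝ) + t • A).det ≤ 1 / A.det ^ t := by
  have hH := hA.isHermitian
  set U : Matrix (Fin d) (Fin d) ℝ := (hH.eigenvectorUnitary : Matrix (Fin d) (Fin d) ℝ)
  have hU : U * star U = 1 := (Matrix.mem_unitaryGroup_iff).mp hH.eigenvectorUnitary.2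
  have hU' : star U * U = 1 := (Matrix.mem_unitaryGroup_iff').mp hH.eigenvectorUnitary.2
  have hdet : ((1 - t) • (1 : Matrix (Fin d) (Fin d) ℝ) + t • A).det
      = ∏ i, ((1 - t) + t * hH.eigenvalues i) := by
    have h1 : (1 : Matrix (Fin d) (Fin d) ℝ) = U * 1 * star U := by
      rw [mul_one, hU]
    have := hH.spectral_theorem
    rw [Unitary.conjStarAlgAut_apply] at this
    calc ((1 - t) • (1 : Matrix (Fin d) (Fin d) ℝ) + t • A).det
        = (U * ((1 - t) • 1 + t • diagonal (RCLike.ofReal ∘ hH.eigenvalues)) * star U).det := by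
          rw [mul_add, add_mul, Matrix.mul_smul, Matrix.mul_smul, Matrix.smul_mul,
            Matrix.smul_mul, ← h1, ← this]
      _ = ((1 - t) • (1 : Matrix (Fin d) (Fin d) ℝ)
            + t • diagonal (RCLike.ofReal ∘ hH.eigenvalues)).det := by
          rw [Matrix.det_mul, Matrix.det_mul, mul_comm, ← mul_assoc, ← Matrix.det_mul, hU']
          simp
      _ = ∏ i, ((1 - t) + t * hH.eigenvalues i) := by
          have heq : (1 - t) • (1 : Matrix (Fin d) (Fin d) ℝ)
              + t • diagonal (RCLike.ofReal ∘ hH.eigenvalues)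
              = diagonal (fun i => (1 - t) + t * hH.eigenvalues i) := by
            rw [Matrix.smul_one_eq_diagonal, ← Matrix.diagonal_smul, ← Matrix.diagonal_add]
            congr 1
          rw [heq, Matrix.det_diagonal]
  have hpos : ∀ i, 0 < (1 - t) + t * hH.eigenvalues i := by
    intro i
    have hμ := hA.eigenvalues_pos i
    rcases eq_or_lt_of_le ht0 with h | h
    · simp [← h]
    · have : 0 < t * hH.eigenvalues i := mul_pos h hμ
      linarith
  have hdpos : 0 < ((1 - t) • (1 : Matrix (Fin d) (Fin d) ℝ) + t • A).det := by
    rw [hdet]; exact Finset.prod_pos fun i _ => hpos i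
  refine ⟨hdpos, ?_⟩
  have hge : A.det ^ t ≤ ((1 - t) • (1 : Matrix (Fin d) (Fin d) ℝ) + t • A).det := by
    have hdetA : A.det = ∏ i, hH.eigenvalues i := by
      have := hH.det_eq_prod_eigenvalues
      simpa using this
    rw [hdet, hdetA, ← Real.finset_prod_rpow _ _ (fun i _ => (hA.eigenvalues_pos i).le)]
    apply Finset.prod_le_prod (fun i _ => Real.rpow_nonneg (hA.eigenvalues_pos i).le t)
    intro i _
    have := Real.geom_mean_le_arith_mean2_weighted (by linarith : (0:ℝ) ≤ 1 - t) ht0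
      zero_le_one (hA.eigenvalues_pos i).le (by ring)
    simpa using this
  have hApow : (0:ℝ) < A.det ^ t := Real.rpow_pos_of_pos hA.det_pos t
  exact one_div_le_one_div_of_le hApow hge

lemma key_pow {a t : ℝ} (ha : 0 < a) (ht0 : 0 ≤ t) (ht1 : t ≤ 1) :
    1 / a ^ t ≤ (1 - t) + t / a := by
  rw [one_div, ← Real.inv_rpow ha.le]
  have := Real.geom_mean_le_arith_mean2_weighted (by linarith : (0:ℝ) ≤ 1 - t) ht0
    zero_le_one (inv_nonneg.mpr ha.le) (by ring)
  simpa [div_eq_mul_inv] using this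

end Aux

/-- McCann interpolation preserves the bound `ρ ≤ 1`: if `ρ(x)/|det DT(x)| ≤ 1` a.e.
and `0 ≤ ρ ≤ 1` a.e., then the interpolated density
`ρ_t(T_t x) = ρ(x)/|det((1-t)I + t DT(x))|` is at most `1` a.e., the key pointwise
inequality being `1/|det((1-t)I + t DT(x))| ≤ (1-t) + t/|det DT(x)|`. -/
theorem stmt_3 {d : ℕ} (Ω : Set (EuclideanSpace ℝ (Fin d))) (hΩ : IsOpen Ω)
    (ρ : EuclideanSpace ℝ (Fin d) → ℝ)
    (hρint : Integrable ρ (volume.restrict Ω))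
    (DT : EuclideanSpace ℝ (Fin d) → Matrix (Fin d) (Fin d) ℝ)
    (hρ : ∀ᵐ x ∂(volume.restrict Ω), 0 ≤ ρ x ∧ ρ x ≤ 1)
    (hDT : ∀ᵐ x ∂(volume.restrict Ω), (DT x).PosDef)
    (hpush : ∀ᵐ x ∂(volume.restrict Ω), ρ x / |(DT x).det| ≤ 1)
    (t : ℝ) (ht : t ∈ Set.Icc (0:ℝ) 1) :
    (∀ᵐ x ∂(volume.restrict Ω),
      1 / |((1 - t) • (1 : Matrix (Fin d) (Fin d) ℝ) + t • DT x).det| ≤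
        (1 - t) + t / |(DT x).det|) ∧
    (∀ᵐ x ∂(volume.restrict Ω),
      ρ x / |((1 - t) • (1 : Matrix (Fin d) (Fin d) ℝ) + t • DT x).det| ≤ 1) := by
  obtain ⟨ht0, ht1⟩ := ht
  have hkey : ∀ᵐ x ∂(volume.restrict Ω),
      1 / |((1 - t) • (1 : Matrix (Fin d) (Fin d) ℝ) + t • DT x).det| ≤
        (1 - t) + t / |(DT x).det| := by
    filter_upwards [hDT] with x hA
    obtain ⟨hd, hle⟩ := key_det hA ht0 ht1
    rw [abs_of_pos hd, abs_of_pos hA.det_pos]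
    exact hle.trans (key_pow hA.det_pos ht0 ht1)
  refine ⟨hkey, ?_⟩
  filter_upwards [hρ, hpush, hkey] with x hx hp hk
  obtain ⟨h0, h1⟩ := hx
  calc ρ x / |((1 - t) • (1 : Matrix (Fin d) (Fin d) ℝ) + t • DT x).det|
      = ρ x * (1 / |((1 - t) • (1 : Matrix (Fin d) (Fin d) ℝ) + t • DT x).det|) := by
        rw [div_eq_mul_one_div]
    _ ≤ ρ x * ((1 - t) + t / |(DT x).det|) := mul_le_mul_of_nonneg_left hk h0
    _ = (1 - t) * ρ x + t * (ρ x / |(DT x).det|) := by ring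
    _ ≤ (1 - t) * 1 + t * 1 := add_le_add
        (mul_le_mul_of_nonneg_left h1 (by linarith)) (mul_le_mul_of_nonneg_left hp ht0)
    _ = 1 := by ring
end

section
/- The map M ↦ (det M)^{-1} is convex on the cone of symmetric positive definite d×d real matrices: for all symmetric positive definite A, B and t ∈ [0,1], (det((1-t)A + tB))^{-1} ≤ (1-t)(det A)^{-1} + t(det B)^{-1}. -/
open Matrix Finset MatrixOrder in
/-- Log-concavity of the determinant on positive definite matrices. -/
lemma det_rpow_mul_det_rpow_le {d : ℕ} (A B : Matrix (Fin d) (Fin d) ℝ)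
    (hA : A.PosDef) (hB : B.PosDef) (t : ℝ) (ht0 : 0 ≤ t) (ht1 : t ≤ 1) :
    A.det ^ (1 - t) * B.det ^ t ≤ ((1 - t) • A + t • B).det := by
  classical
  set S := CFC.sqrt A with hSdef
  have hS : S.PosSemidef := (CFC.sqrt_nonneg A).posSemidef
  have hSh : S.IsHermitian := hS.isHermitian
  have hSS : S * S = A := CFC.sqrt_mul_sqrt_self A hA.posSemidef.nonneg
  have detS_sq : S.det * S.det = A.det := by rw [← Matrix.det_mul, hSS]
  have detS_nonneg : 0 ≤ S.det := by
    rw [hSh.det_eq_prod_eigenvalues]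
    exact Finset.prod_nonneg fun i _ => by simpa using hS.eigenvalues_nonneg i
  have detS_pos : 0 < S.det := by nlinarith [hA.det_pos]
  have hUnit : IsUnit S.det := detS_pos.ne'.isUnit
  have hinv1 : S * S⁻¹ = 1 := Matrix.mul_nonsing_inv S hUnit
  have hinv2 : S⁻¹ * S = 1 := Matrix.nonsing_inv_mul S hUnit
  set M := S⁻¹ * B * S⁻¹ with hMdef
  have hM : M.PosSemidef := by
    have := hB.posSemidef.conjTranspose_mul_mul_same S⁻¹
    rwa [hSh.inv.eq] at this
  have hMh : M.IsHermitian := hM.isHermitian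
  have hSMS : S * M * S = B := by
    rw [hMdef]
    simp only [← Matrix.mul_assoc]
    rw [hinv1, one_mul, Matrix.mul_assoc, hinv2, mul_one]
  set N := (1 - t) • (1 : Matrix (Fin d) (Fin d) ℝ) + t • M with hNdef
  have keyid : (1 - t) • A + t • B = S * N * S := by
    rw [hNdef]
    rw [Matrix.mul_add, Matrix.add_mul]
    rw [Matrix.mul_smul, Matrix.smul_mul, Matrix.mul_smul, Matrix.smul_mul, mul_one, hSS, hSMS]
  -- diagonalize M
  set U : Matrix (Fin d) (Fin d) ℝ := (hMh.eigenvectorUnitary : Matrix (Fin d) (Fin d) ℝ) with hUdef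
  set μ := hMh.eigenvalues with hμdef
  have hU1 : U * star U = 1 := Matrix.mem_unitaryGroup_iff.mp hMh.eigenvectorUnitary.2
  have hMspec : M = U * Matrix.diagonal (RCLike.ofReal ∘ μ) * star U := hMh.spectral_theorem
  have hNdiag : N = U * Matrix.diagonal (fun i => (1 - t) + t * μ i) * star U := by
    have hD : Matrix.diagonal (fun i => (1 - t) + t * μ i)
        = (1 - t) • (1 : Matrix (Fin d) (Fin d) ℝ)
          + t • Matrix.diagonal (RCLike.ofReal ∘ μ) := by
      ext i j
      by_cases h : i = j <;>
        simp [Matrix.diagonal_apply, Matrix.one_apply, h]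
    rw [hD, Matrix.mul_add, Matrix.add_mul, hNdef]
    rw [Matrix.mul_smul, Matrix.smul_mul, Matrix.mul_smul, Matrix.smul_mul, mul_one, hU1, ← hMspec]
  have detU : U.det * (star U).det = 1 := by rw [← Matrix.det_mul, hU1, Matrix.det_one]
  have detN : N.det = ∏ i, ((1 - t) + t * μ i) := by
    rw [hNdiag, Matrix.det_mul, Matrix.det_mul, Matrix.det_diagonal]
    rw [mul_comm U.det, mul_assoc, detU, mul_one]
  have detM : M.det = B.det / A.det := by
    have : M.det = S⁻¹.det * B.det * S⁻¹.det := by rw [hMdef, Matrix.det_mul, Matrix.det_mul]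
    rw [this, Matrix.det_nonsing_inv, Ring.inverse_eq_inv', ← detS_sq]
    field_simp
  have detM_prod : M.det = ∏ i, μ i := by
    have := hMh.det_eq_prod_eigenvalues
    simpa using this
  have μnonneg : ∀ i, 0 ≤ μ i := fun i => by simpa using hM.eigenvalues_nonneg i
  -- AM-GM on eigenvalues
  have prodbound : M.det ^ t ≤ ∏ i, ((1 - t) + t * μ i) := by
    rw [detM_prod, ← Real.finset_prod_rpow _ _ (fun i _ => μnonneg i) t]
    refine Finset.prod_le_prod (fun i _ => Real.rpow_nonneg (μnonneg i) t) (fun i _ => ?_)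
    have := Real.geom_mean_le_arith_mean2_weighted (by linarith : (0:ℝ) ≤ 1 - t) ht0
      zero_le_one (μnonneg i) (by ring)
    simpa using this
  have detcombo : ((1 - t) • A + t • B).det = A.det * N.det := by
    rw [keyid, Matrix.det_mul, Matrix.det_mul, ← detS_sq]
    ring
  rw [detcombo, detN]
  have : A.det ^ (1 - t) * B.det ^ t = A.det * M.det ^ t := by
    rw [detM, Real.div_rpow hB.det_pos.le hA.det_pos.le, Real.rpow_sub hA.det_pos, Real.rpow_one]
    field_simp
  rw [this]
  exact mul_le_mul_of_nonneg_left prodbound hA.det_pos.le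

/-- Convexity of `M ↦ (det M)⁻¹` on symmetric positive definite matrices:
for `A, B` positive definite and `t ∈ [0,1]`,
`(det((1-t)A + tB))⁻¹ ≤ (1-t)(det A)⁻¹ + t(det B)⁻¹`. -/
theorem stmt_4 {d : ℕ} (A B : Matrix (Fin d) (Fin d) ℝ)
    (hA : A.PosDef) (hB : B.PosDef) (t : ℝ) (ht : t ∈ Set.Icc (0:ℝ) 1) :
    (((1 - t) • A + t • B).det)⁻¹ ≤ (1 - t) * (A.det)⁻¹ + t * (B.det)⁻¹ := by
  obtain ⟨ht0, ht1⟩ := ht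
  have ha := hA.det_pos
  have hb := hB.det_pos
  have key := det_rpow_mul_det_rpow_le A B hA hB t ht0 ht1
  have hy : 0 < A.det ^ (1 - t) * B.det ^ t :=
    mul_pos (Real.rpow_pos_of_pos ha _) (Real.rpow_pos_of_pos hb _)
  calc (((1 - t) • A + t • B).det)⁻¹ ≤ (A.det ^ (1 - t) * B.det ^ t)⁻¹ := by
        exact inv_anti₀ hy key
    _ = (A.det⁻¹) ^ (1 - t) * (B.det⁻¹) ^ t := by
        rw [mul_inv, Real.inv_rpow ha.le, Real.inv_rpow hb.le]
    _ ≤ (1 - t) * A.det⁻¹ + t * B.det⁻¹ :=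
        Real.geom_mean_le_arith_mean2_weighted (by linarith) ht0
          (inv_nonneg.mpr ha.le) (inv_nonneg.mpr hb.le) (by ring)
end
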